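/- Fix ε ∈ (0,1). Let L be an r-dimensional subspace of C^n and let C ⊂ L be an (ε/16)-net of the unit sphere of L (in the Euclidean norm). If a matrix A ∈ C^{m×n} is an (ε/2)-JL embedding of C, then (1-ε)‖x‖₂² ≤ ‖Ax‖₂² ≤ (1+ε)‖x‖₂² holds for all x ∈ L. -/
import Mathlib


open scoped BigOperators

/-- Squared Euclidean norm of a vector in `ℂ^n`. -/
noncomputable def nsq {n : ℕ} (x : Fin n → ℂ) : ℝ := ∑ i, ‖x i‖ ^ 2

/-- `A` is an `ε'`-JL embedding of `S ⊆ ℂ^n`: `‖Ax‖₂² = (1 + ε_x)‖x‖₂²` for some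
`ε_x ∈ (-ε', ε')`, for every `x ∈ S`. -/
def IsJL {m n : ℕ} (ε : ℝ) (A : Matrix (Fin m) (Fin n) ℂ) (S : Set (Fin n → ℂ)) : Prop :=
  ∀ x ∈ S, ∃ e ∈ Set.Ioo (-ε) ε, nsq (A.mulVec x) = (1 + e) * nsq x

/-- The identity map `ℂ^n → EuclideanSpace ℂ (Fin n)`. -/
noncomputable def toE {n : ℕ} (x : Fin n → ℂ) : EuclideanSpace ℂ (Fin n) :=
  (WithLp.linearEquiv 2 ℂ (Fin n → ℂ)).symm x

/-- Matrix multiplication as a linear map between Euclidean spaces. -/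
noncomputable def fE {m n : ℕ} (A : Matrix (Fin m) (Fin n) ℂ) :
    EuclideanSpace ℂ (Fin n) →ₗ[ℂ] EuclideanSpace ℂ (Fin m) :=
  (WithLp.linearEquiv 2 ℂ (Fin m → ℂ)).symm.toLinearMap ∘ₗ A.mulVecLin ∘ₗ
    (WithLp.linearEquiv 2 ℂ (Fin n → ℂ)).toLinearMap

lemma nsq_eq {n : ℕ} (x : Fin n → ℂ) : nsq x = ‖toE x‖ ^ 2 := by
  rw [toE, EuclideanSpace.norm_eq, Real.sq_sqrt (by positivity)]
  rfl

lemma fE_apply {m n : ℕ} (A : Matrix (Fin m) (Fin n) ℂ) (x : Fin n → ℂ) :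
    fE A (toE x) = toE (A.mulVec x) := rfl

lemma aux_up (ε M s t : ℝ) (hε0 : 0 < ε) (hε1 : ε < 1) (hM : 0 ≤ M)
    (hs : s ^ 2 = 1 + ε / 2) (hs0 : 0 ≤ s) (ht : t ^ 2 = 1 + ε) (ht0 : 0 ≤ t)
    (h : M ≤ s + M * (ε / 16)) : M ≤ t := by
  have hs1 : 1 ≤ s := by nlinarith
  have ht1 : 1 ≤ t := by nlinarith
  have hb : s ^ 2 ≤ (t * (1 - ε / 16)) ^ 2 := by nlinarith [sq_nonneg ε, pow_pos hε0 3, mul_pos hε0 hε0]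
  have h1 : s ≤ t * (1 - ε / 16) :=
    le_of_pow_le_pow_left₀ two_ne_zero (by nlinarith) hb
  nlinarith

lemma aux_low (ε s t u : ℝ) (hε0 : 0 < ε) (hε1 : ε < 1)
    (hs : s ^ 2 = 1 - ε / 2) (hs0 : 0 ≤ s) (ht : t ^ 2 = 1 + ε) (ht0 : 0 ≤ t)
    (hu : u ^ 2 = 1 - ε) (hu0 : 0 ≤ u) : u + t * (ε / 16) ≤ s := by
  have hs1 : s ≤ 1 := by nlinarith
  have hu1 : u ≤ 1 := by nlinarith
  have ht32 : t ≤ 3 / 2 := by nlinarith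
  have hspos : (0:ℝ) < s := by nlinarith
  have hsu : ε / 4 ≤ s - u := by nlinarith
  nlinarith

theorem jl_net_subspace_embedding {m n r : ℕ} {ε : ℝ} (hε : ε ∈ Set.Ioo (0 : ℝ) 1)
    (L : Submodule ℂ (Fin n → ℂ)) (hr : Module.finrank ℂ L = r)
    (C : Set (Fin n → ℂ)) (hCL : C ⊆ {x | x ∈ L ∧ nsq x = 1})
    (hnet : ∀ x ∈ L, nsq x = 1 → ∃ c ∈ C, Real.sqrt (nsq (x - c)) ≤ ε / 16)
    (A : Matrix (Fin m) (Fin n) ℂ) (hA : IsJL (ε / 2) A C) :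
    ∀ x ∈ L, (1 - ε) * nsq x ≤ nsq (A.mulVec x) ∧ nsq (A.mulVec x) ≤ (1 + ε) * nsq x := by
  obtain ⟨hε0, hε1⟩ := hε
  -- the subspace viewed in Euclidean space
  let L' : Submodule ℂ (EuclideanSpace ℂ (Fin n)) :=
    L.comap (WithLp.linearEquiv 2 ℂ (Fin n → ℂ)).toLinearMap
  have hmem : ∀ x : Fin n → ℂ, x ∈ L → toE x ∈ L' := fun x hx => hx
  let g : L' →L[ℂ] EuclideanSpace ℂ (Fin m) :=
    LinearMap.toContinuousLinearMap ((fE A) ∘ₗ L'.subtype)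
  have hM0 : (0:ℝ) ≤ ‖g‖ := g.opNorm_nonneg
  have hgy : ∀ v : EuclideanSpace ℂ (Fin n), v ∈ L' → ‖fE A v‖ ≤ ‖g‖ * ‖v‖ := by
    intro v hv
    exact g.le_opNorm ⟨v, hv⟩
  -- net in Euclidean language
  have hnear : ∀ v : EuclideanSpace ℂ (Fin n), v ∈ L' → ‖v‖ = 1 →
      ∃ c ∈ C, ‖v - toE c‖ ≤ ε / 16 := by
    intro v hv hv1
    have hv1' : nsq ((WithLp.linearEquiv 2 ℂ (Fin n → ℂ)) v) = 1 := by
      have h := nsq_eq ((WithLp.linearEquiv 2 ℂ (Fin n → ℂ)) v)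
      have h2 : toE ((WithLp.linearEquiv 2 ℂ (Fin n → ℂ)) v) = v := rfl
      rw [h, h2, hv1, one_pow]
    obtain ⟨c, hc, hcd⟩ := hnet ((WithLp.linearEquiv 2 ℂ (Fin n → ℂ)) v) hv hv1'
    refine ⟨c, hc, ?_⟩
    have h1 : nsq ((WithLp.linearEquiv 2 ℂ (Fin n → ℂ)) v - c)
        = ‖v - toE c‖ ^ 2 := by
      rw [nsq_eq]; rfl
    rwa [h1, Real.sqrt_sq (norm_nonneg _)] at hcd
  -- JL bounds for net points
  have hC : ∀ c ∈ C, ‖fE A (toE c)‖ ^ 2 ≤ 1 + ε / 2 ∧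
      1 - ε / 2 ≤ ‖fE A (toE c)‖ ^ 2 := by
    intro c hc
    obtain ⟨e, he, heq⟩ := hA c hc
    have h1 : nsq (A.mulVec c) = 1 + e := by rw [heq, (hCL hc).2, mul_one]
    have h2 : ‖fE A (toE c)‖ ^ 2 = 1 + e := by
      rw [fE_apply, ← nsq_eq, h1]
    rw [h2]
    obtain ⟨he1, he2⟩ := he
    constructor <;> linarith
  have hCmem : ∀ c ∈ C, toE c ∈ L' := fun c hc => hmem c (hCL hc).1
  -- sqrt abbreviations
  set s : ℝ := Real.sqrt (1 + ε / 2) with hsdef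
  have hs : s ^ 2 = 1 + ε / 2 := Real.sq_sqrt (by linarith)
  have hs0 : 0 ≤ s := Real.sqrt_nonneg _
  set t : ℝ := Real.sqrt (1 + ε) with htdef
  have ht : t ^ 2 = 1 + ε := Real.sq_sqrt (by linarith)
  have ht0 : 0 ≤ t := Real.sqrt_nonneg _
  set s' : ℝ := Real.sqrt (1 - ε / 2) with hs'def
  have hs' : s' ^ 2 = 1 - ε / 2 := Real.sq_sqrt (by linarith)
  have hs'0 : 0 ≤ s' := Real.sqrt_nonneg _
  set u' : ℝ := Real.sqrt (1 - ε) with hu'def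
  have hu' : u' ^ 2 = 1 - ε := Real.sq_sqrt (by linarith)
  have hu'0 : 0 ≤ u' := Real.sqrt_nonneg _
  -- bound on unit vectors: upper via net
  have hunit : ∀ v : EuclideanSpace ℂ (Fin n), v ∈ L' → ‖v‖ = 1 →
      ‖fE A v‖ ≤ s + ‖g‖ * (ε / 16) := by
    intro v hv hv1
    obtain ⟨c, hc, hcd⟩ := hnear v hv hv1
    have h1 : ‖fE A (toE c)‖ ≤ s := by
      rw [hsdef, ← Real.sqrt_sq (norm_nonneg ((fE A) (toE c)))]
      exact Real.sqrt_le_sqrt (hC c hc).1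
    have h2 : ‖fE A (v - toE c)‖ ≤ ‖g‖ * (ε / 16) := by
      have hsub : v - toE c ∈ L' := L'.sub_mem hv (hCmem c hc)
      calc ‖fE A (v - toE c)‖ ≤ ‖g‖ * ‖v - toE c‖ := hgy _ hsub
        _ ≤ ‖g‖ * (ε / 16) := by
            exact mul_le_mul_of_nonneg_left hcd hM0
    have hsplit : fE A v = fE A (toE c) + fE A (v - toE c) := by
      rw [map_sub]; abel
    calc ‖fE A v‖ = ‖fE A (toE c) + fE A (v - toE c)‖ := by rw [← hsplit]
      _ ≤ ‖fE A (toE c)‖ + ‖fE A (v - toE c)‖ := norm_add_le _ _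
      _ ≤ s + ‖g‖ * (ε / 16) := add_le_add h1 h2
  -- hence the operator norm bound
  have hMb : ‖g‖ ≤ s + ‖g‖ * (ε / 16) := by
    apply ContinuousLinearMap.opNorm_le_bound _ (by positivity)
    intro y
    rcases eq_or_ne (y : EuclideanSpace ℂ (Fin n)) 0 with h0 | h0
    · have : y = 0 := Subtype.ext h0
      simp only [this, map_zero, norm_zero, mul_zero]
      exact le_refl 0
    · set a : ℝ := ‖(y : EuclideanSpace ℂ (Fin n))‖ with hadef
      have ha0 : 0 < a := norm_pos_iff.mpr h0
      set v : EuclideanSpace ℂ (Fin n) := ((a : ℂ))⁻¹ • (y : EuclideanSpace ℂ (Fin n)) with hvdef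
      have hvL : v ∈ L' := L'.smul_mem _ y.2
      have hv1 : ‖v‖ = 1 := by
        rw [hvdef, norm_smul, norm_inv, Complex.norm_real, Real.norm_eq_abs,
          abs_of_pos ha0, ← hadef, inv_mul_cancel₀ (ne_of_gt ha0)]
      have hgv := hunit v hvL hv1
      have hyv : (y : EuclideanSpace ℂ (Fin n)) = (a : ℂ) • v := by
        rw [hvdef, smul_inv_smul₀]
        exact_mod_cast Complex.ofReal_ne_zero.mpr (ne_of_gt ha0)
      have : ‖g y‖ = a * ‖fE A v‖ := by
        have hgyv : (g y : EuclideanSpace ℂ (Fin m)) = fE A (y : EuclideanSpace ℂ (Fin n)) := rfl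
        rw [hgyv, hyv, map_smul, norm_smul, Complex.norm_real, Real.norm_eq_abs,
          abs_of_pos ha0]
      have hy : ‖y‖ = a := hadef.symm
      rw [this, hy]
      calc a * ‖fE A v‖ ≤ a * (s + ‖g‖ * (ε / 16)) :=
            mul_le_mul_of_nonneg_left hgv (le_of_lt ha0)
        _ = (s + ‖g‖ * (ε / 16)) * a := by ring
  have hMt : ‖g‖ ≤ t := aux_up ε ‖g‖ s t hε0 hε1 hM0 hs hs0 ht ht0 hMb
  -- lower bound on unit vectors
  have hlow : ∀ v : EuclideanSpace ℂ (Fin n), v ∈ L' → ‖v‖ = 1 →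
      u' ≤ ‖fE A v‖ := by
    intro v hv hv1
    obtain ⟨c, hc, hcd⟩ := hnear v hv hv1
    have h1 : s' ≤ ‖fE A (toE c)‖ := by
      have h := (hC c hc).2
      rw [hs'def]
      exact Real.sqrt_le_sqrt h |>.trans_eq (Real.sqrt_sq (norm_nonneg _))
    have h2 : ‖fE A (v - toE c)‖ ≤ ‖g‖ * (ε / 16) := by
      have hsub : v - toE c ∈ L' := L'.sub_mem hv (hCmem c hc)
      calc ‖fE A (v - toE c)‖ ≤ ‖g‖ * ‖v - toE c‖ := hgy _ hsub
        _ ≤ ‖g‖ * (ε / 16) := mul_le_mul_of_nonneg_left hcd hM0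
    have h3 : ‖fE A (toE c)‖ - ‖fE A (v - toE c)‖ ≤ ‖fE A v‖ := by
      have : fE A (toE c) = fE A v + fE A (toE c - v) := by
        rw [map_sub]; abel
      have h4 : ‖fE A (toE c)‖ ≤ ‖fE A v‖ + ‖fE A (toE c - v)‖ := by
        rw [this]; exact norm_add_le _ _
      have h5 : ‖fE A (toE c - v)‖ = ‖fE A (v - toE c)‖ := by
        rw [map_sub, map_sub, norm_sub_rev]
      linarith
    have h6 : ‖g‖ * (ε / 16) ≤ t * (ε / 16) :=
      mul_le_mul_of_nonneg_right hMt (by linarith)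
    have h7 := aux_low ε s' t u' hε0 hε1 hs' hs'0 ht ht0 hu' hu'0
    linarith
  -- conclude
  intro x hx
  rcases eq_or_ne x 0 with rfl | hx0
  · simp [nsq, Matrix.mulVec_zero]
  · have hxE : toE x ≠ 0 := fun h => hx0 (by exact congrArg (WithLp.linearEquiv 2 ℂ (Fin n → ℂ)) h)
    set a : ℝ := ‖toE x‖ with hadef
    have ha0 : 0 < a := norm_pos_iff.mpr hxE
    set v : EuclideanSpace ℂ (Fin n) := ((a : ℂ))⁻¹ • (toE x) with hvdef
    have hvL : v ∈ L' := L'.smul_mem _ (hmem x hx)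
    have hv1 : ‖v‖ = 1 := by
      rw [hvdef, norm_smul, norm_inv, Complex.norm_real, Real.norm_eq_abs,
        abs_of_pos ha0, ← hadef, inv_mul_cancel₀ (ne_of_gt ha0)]
    have hxv : toE x = (a : ℂ) • v := by
      rw [hvdef, smul_inv_smul₀]
      exact_mod_cast Complex.ofReal_ne_zero.mpr (ne_of_gt ha0)
    have hnorm : ‖fE A (toE x)‖ = a * ‖fE A v‖ := by
      rw [hxv, map_smul, norm_smul, Complex.norm_real, Real.norm_eq_abs, abs_of_pos ha0]
    have hup : ‖fE A v‖ ≤ t := le_trans (by simpa using hgy v hvL |>.trans_eq (by rw [hv1, mul_one])) hMt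
    have hlo : u' ≤ ‖fE A v‖ := hlow v hvL hv1
    have hnsqx : nsq x = a ^ 2 := by rw [nsq_eq, hadef]
    have hnsqA : nsq (A.mulVec x) = (a * ‖fE A v‖) ^ 2 := by
      rw [nsq_eq, ← fE_apply, hnorm]
    rw [hnsqx, hnsqA]
    constructor
    · have : u' * a ≤ a * ‖fE A v‖ := by
        rw [mul_comm u' a]
        exact mul_le_mul_of_nonneg_left hlo (le_of_lt ha0)
      calc (1 - ε) * a ^ 2 = (u' * a) ^ 2 := by rw [mul_pow, hu']
        _ ≤ (a * ‖fE A v‖) ^ 2 := by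
            apply pow_le_pow_left₀ (by positivity) this
    · have : a * ‖fE A v‖ ≤ t * a := by
        rw [mul_comm t a]
        exact mul_le_mul_of_nonneg_left hup (le_of_lt ha0)
      calc (a * ‖fE A v‖) ^ 2 ≤ (t * a) ^ 2 := by
            apply pow_le_pow_left₀ (by positivity) this
        _ = (1 + ε) * a ^ 2 := by rw [mul_pow, ht]
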